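/- Let â ∈ ℝ and let y, z : ℝ → ℝ be twice differentiable functions satisfying the Wente ODE system with parameter â. Then the two functions u ↦ y'(u)² − z'(u)² − (â−1)·y(u)² + â·z(u)² + (y(u)²−z(u)²)² and u ↦ (z(u)y'(u) − y(u)z'(u))² + z'(u)² + z(u)²·(y(u)² − z(u)² − â) are constant on ℝ. -/

import Mathlib

/-- The Wente ODE system with parameter `ahat`, for twice differentiable `y`, `z`:
`y'' = (ahat−1)y − 2y(y²−z²)`, `z'' = ahat·z − 2z(y²−z²)`. -/
def WenteSystem (ahat : ℝ) (y z : ℝ → ℝ) : Prop :=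
  (∀ u : ℝ, DifferentiableAt ℝ y u) ∧ (∀ u : ℝ, DifferentiableAt ℝ (deriv y) u) ∧
  (∀ u : ℝ, DifferentiableAt ℝ z u) ∧ (∀ u : ℝ, DifferentiableAt ℝ (deriv z) u) ∧
  (∀ u : ℝ, deriv (deriv y) u = (ahat - 1) * y u - 2 * y u * ((y u) ^ 2 - (z u) ^ 2)) ∧
  (∀ u : ℝ, deriv (deriv z) u = ahat * z u - 2 * z u * ((y u) ^ 2 - (z u) ^ 2))

theorem wente_hamiltonian_constants (ahat : ℝ) (y z : ℝ → ℝ)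
    (hsys : WenteSystem ahat y z) :
    (∃ h : ℝ, ∀ u : ℝ,
      (deriv y u) ^ 2 - (deriv z u) ^ 2 - (ahat - 1) * (y u) ^ 2 + ahat * (z u) ^ 2 +
        ((y u) ^ 2 - (z u) ^ 2) ^ 2 = h) ∧
    (∃ k : ℝ, ∀ u : ℝ,
      (z u * deriv y u - y u * deriv z u) ^ 2 + (deriv z u) ^ 2 +
        (z u) ^ 2 * ((y u) ^ 2 - (z u) ^ 2 - ahat) = k) := by
  obtain ⟨hy, hy', hz, hz', hye, hze⟩ := hsys
  constructor
  · have hF : ∀ v : ℝ, HasDerivAt (fun v => (deriv y v) ^ 2 - (deriv z v) ^ 2 -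
        (ahat - 1) * (y v) ^ 2 + ahat * (z v) ^ 2 + ((y v) ^ 2 - (z v) ^ 2) ^ 2) 0 v := by
      intro v
      have hY := (hy v).hasDerivAt
      have hY' := (hy' v).hasDerivAt
      have hZ := (hz v).hasDerivAt
      have hZ' := (hz' v).hasDerivAt
      have H := ((((hY'.pow 2).sub (hZ'.pow 2)).sub ((hY.pow 2).const_mul (ahat - 1))).add
        ((hZ.pow 2).const_mul ahat)).add (((hY.pow 2).sub (hZ.pow 2)).pow 2)
      refine H.congr_deriv ?_
      rw [hye v, hze v]
      push_cast [Pi.pow_apply, Pi.sub_apply, Pi.mul_apply]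
      ring
    exact ⟨_, fun u => is_const_of_deriv_eq_zero (fun x => (hF x).differentiableAt)
      (fun x => (hF x).deriv) u 0⟩
  · have hF : ∀ v : ℝ, HasDerivAt (fun v => (z v * deriv y v - y v * deriv z v) ^ 2 +
        (deriv z v) ^ 2 + (z v) ^ 2 * ((y v) ^ 2 - (z v) ^ 2 - ahat)) 0 v := by
      intro v
      have hY := (hy v).hasDerivAt
      have hY' := (hy' v).hasDerivAt
      have hZ := (hz v).hasDerivAt
      have hZ' := (hz' v).hasDerivAt
      have H := ((((hZ.mul hY').sub (hY.mul hZ')).pow 2).add (hZ'.pow 2)).add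
        ((hZ.pow 2).mul (((hY.pow 2).sub (hZ.pow 2)).sub_const ahat))
      refine H.congr_deriv ?_
      rw [hye v, hze v]
      push_cast [Pi.pow_apply, Pi.sub_apply, Pi.mul_apply]
      ring
    exact ⟨_, fun u => is_const_of_deriv_eq_zero (fun x => (hF x).differentiableAt)
      (fun x => (hF x).deriv) u 0⟩
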